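/- In an i.i.d. environment, the half-space vertical law-of-large-numbers constant coincides with the full-space one: for G ∈ {F, L}, g^bk_f(e) = g^bk(e), where e = (0,1). -/

import Mathlib

open MeasureTheory ProbabilityTheory Filter Asymptotics

namespace HalfSpacePolymer

/-- A directed path in the half-space `H = {(x,t) ∈ ℤ² : x ≥ 0}` from `(x₁,t₁)` to `(x₂,t₂)`,
with increments `(±1, 1)`, identified with a function `ℤ → ℤ≥0` of the height coordinate
(frozen outside `⟦t₁, t₂⟧`). -/
structure HSPath (x₁ t₁ x₂ t₂ : ℤ) where
  f : ℤ → ℤ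
  nonneg : ∀ t : ℤ, 0 ≤ f t
  eq_left : ∀ t : ℤ, t ≤ t₁ → f t = x₁
  eq_right : ∀ t : ℤ, t₂ ≤ t → f t = x₂
  step : ∀ t : ℤ, t₁ ≤ t → t < t₂ → f (t + 1) = f t + 1 ∨ f (t + 1) = f t - 1

instance (x₁ t₁ x₂ t₂ : ℤ) : MeasurableSpace (HSPath x₁ t₁ x₂ t₂) := ⊤

/-- A full-space directed path in `ℤ²` (increments `(±1,1)`, not confined to the half-space). -/
structure FPath (x₁ t₁ x₂ t₂ : ℤ) where
  f : ℤ → ℤ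
  eq_left : ∀ t : ℤ, t ≤ t₁ → f t = x₁
  eq_right : ∀ t : ℤ, t₂ ≤ t → f t = x₂
  step : ∀ t : ℤ, t₁ ≤ t → t < t₂ → f (t + 1) = f t + 1 ∨ f (t + 1) = f t - 1

/-- The Hamiltonian (energy) of a half-space path in the environment `wt`. -/
noncomputable def energy (wt : ℤ × ℤ → ℝ) {x₁ t₁ x₂ t₂ : ℤ} (π : HSPath x₁ t₁ x₂ t₂) : ℝ :=
  ∑ s ∈ Finset.Icc t₁ t₂, wt (π.f s, s)

/-- The Hamiltonian (energy) of a full-space path in the environment `wt`. -/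
noncomputable def energyF (wt : ℤ × ℤ → ℝ) {x₁ t₁ x₂ t₂ : ℤ} (π : FPath x₁ t₁ x₂ t₂) : ℝ :=
  ∑ s ∈ Finset.Icc t₁ t₂, wt (π.f s, s)

/-- Partition function of the half-space polymer. -/
noncomputable def Zfun (wt : ℤ × ℤ → ℝ) (x₁ t₁ x₂ t₂ : ℤ) : ℝ :=
  ∑' π : HSPath x₁ t₁ x₂ t₂, Real.exp (energy wt π)

/-- Free energy of the half-space polymer. -/
noncomputable def freeEnergy (wt : ℤ × ℤ → ℝ) (x₁ t₁ x₂ t₂ : ℤ) : ℝ :=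
  Real.log (Zfun wt x₁ t₁ x₂ t₂)

/-- Last passage time of the half-space model. -/
noncomputable def lpp (wt : ℤ × ℤ → ℝ) (x₁ t₁ x₂ t₂ : ℤ) : ℝ :=
  ⨆ π : HSPath x₁ t₁ x₂ t₂, energy wt π

/-- Free energy of the full-space polymer. -/
noncomputable def freeEnergyF (wt : ℤ × ℤ → ℝ) (x₁ t₁ x₂ t₂ : ℤ) : ℝ :=
  Real.log (∑' π : FPath x₁ t₁ x₂ t₂, Real.exp (energyF wt π))

/-- Last passage time of the full-space model. -/
noncomputable def lppF (wt : ℤ × ℤ → ℝ) (x₁ t₁ x₂ t₂ : ℤ) : ℝ :=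
  ⨆ π : FPath x₁ t₁ x₂ t₂, energyF wt π

/-- Quenched polymer (Gibbs) probability of a set `A` of paths. -/
noncomputable def polyQ (wt : ℤ × ℤ → ℝ) (x₁ t₁ x₂ t₂ : ℤ)
    (A : Set (HSPath x₁ t₁ x₂ t₂)) : ℝ :=
  (∑' π : A, Real.exp (energy wt π.1)) / Zfun wt x₁ t₁ x₂ t₂

/-- The quenched polymer measure, as a measure on the set of paths. -/
noncomputable def polyMeasure (wt : ℤ × ℤ → ℝ) (x₁ t₁ x₂ t₂ : ℤ) :
    Measure (HSPath x₁ t₁ x₂ t₂) :=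
  (ENNReal.ofReal (Zfun wt x₁ t₁ x₂ t₂))⁻¹ •
    Measure.sum fun π : HSPath x₁ t₁ x₂ t₂ =>
      ENNReal.ofReal (Real.exp (energy wt π)) • Measure.dirac π

/-- A geodesic: a path of maximal energy among paths with the same endpoints. -/
def IsGeodesic (wt : ℤ × ℤ → ℝ) {x₁ t₁ x₂ t₂ : ℤ} (π : HSPath x₁ t₁ x₂ t₂) : Prop :=
  ∀ π' : HSPath x₁ t₁ x₂ t₂, energy wt π' ≤ energy wt π

/-- The left-most geodesic. -/
def IsLeftmostGeodesic (wt : ℤ × ℤ → ℝ) {x₁ t₁ x₂ t₂ : ℤ} (π : HSPath x₁ t₁ x₂ t₂) : Prop :=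
  IsGeodesic wt π ∧
    ∀ π' : HSPath x₁ t₁ x₂ t₂, IsGeodesic wt π' → ∀ t : ℤ, π.f t ≤ π'.f t

/-- The random environment data: a half-space environment `w` (vertical weights on `x = 0`
distributed as `μvt`, bulk weights as `μbk`), together with a coupled bulk (i.i.d.) environment
`wbk` agreeing with `w` off the vertical axis; all weights are jointly independent, almost
surely positive, subexponential, and of unbounded support. -/
structure EnvData (Ω : Type*) [MeasurableSpace Ω] (P : Measure Ω) where
  w : ℤ × ℤ → Ω → ℝ
  wbk : ℤ × ℤ → Ω → ℝ
  μbk : Measure ℝ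
  μvt : Measure ℝ
  prob_bk : IsProbabilityMeasure μbk
  prob_vt : IsProbabilityMeasure μvt
  meas_w : ∀ v : ℤ × ℤ, Measurable (w v)
  meas_wbk : ∀ v : ℤ × ℤ, Measurable (wbk v)
  agree : ∀ v : ℤ × ℤ, v.1 ≠ 0 → wbk v = w v
  law_w_bulk : ∀ v : ℤ × ℤ, v.1 ≠ 0 → P.map (w v) = μbk
  law_w_vert : ∀ t : ℤ, P.map (w (0, t)) = μvt
  law_wbk : ∀ v : ℤ × ℤ, P.map (wbk v) = μbk
  indep : iIndepFun (β := fun _ : (ℤ × ℤ) ⊕ ℤ => ℝ)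
    (Sum.elim w fun t : ℤ => wbk (0, t)) P
  pos_bk : μbk (Set.Iic 0) = 0
  pos_vt : μvt (Set.Iic 0) = 0
  subexp_bk : ∃ z : ℝ, 0 < z ∧ Integrable (fun x => Real.exp (z * x)) μbk
  subexp_vt : ∃ z : ℝ, 0 < z ∧ Integrable (fun x => Real.exp (z * x)) μvt
  unbdd_bk : ∀ z : ℝ, 0 < μbk (Set.Ioi z)
  unbdd_vt : ∀ z : ℝ, 0 < μvt (Set.Ioi z)

variable {Ω : Type*} [MeasurableSpace Ω] {P : Measure Ω}

/-- `G(x₁,t₁;x₂,t₂)` in the half-space environment: the last passage time if `zt = true`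
(zero temperature), the free energy if `zt = false` (positive temperature). -/
noncomputable def Ghs (E : EnvData Ω P) (zt : Bool) (x₁ t₁ x₂ t₂ : ℤ) (e : Ω) : ℝ :=
  if zt then lpp (fun v => E.w v e) x₁ t₁ x₂ t₂ else freeEnergy (fun v => E.w v e) x₁ t₁ x₂ t₂

/-- `G^bk(x₁,t₁;x₂,t₂)`: half-space paths in the bulk (i.i.d.) environment. -/
noncomputable def Gbk (E : EnvData Ω P) (zt : Bool) (x₁ t₁ x₂ t₂ : ℤ) (e : Ω) : ℝ :=
  if zt then lpp (fun v => E.wbk v e) x₁ t₁ x₂ t₂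
  else freeEnergy (fun v => E.wbk v e) x₁ t₁ x₂ t₂

/-- `G^bk_f(x₁,t₁;x₂,t₂)`: full-space paths in the bulk (i.i.d.) environment. -/
noncomputable def GbkF (E : EnvData Ω P) (zt : Bool) (x₁ t₁ x₂ t₂ : ℤ) (e : Ω) : ℝ :=
  if zt then lppF (fun v => E.wbk v e) x₁ t₁ x₂ t₂
  else freeEnergyF (fun v => E.wbk v e) x₁ t₁ x₂ t₂

/-- Mean of `G(x₁,t₁;x₂,t₂)` over the environment. -/
noncomputable def meanG (E : EnvData Ω P) (zt : Bool) (x₁ t₁ x₂ t₂ : ℤ) : ℝ :=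
  ∫ e, Ghs E zt x₁ t₁ x₂ t₂ e ∂P

/-- Mean of `G^bk(x₁,t₁;x₂,t₂)` over the environment. -/
noncomputable def meanGbk (E : EnvData Ω P) (zt : Bool) (x₁ t₁ x₂ t₂ : ℤ) : ℝ :=
  ∫ e, Gbk E zt x₁ t₁ x₂ t₂ e ∂P

/-- `g` and `g^bk` are the laws of large numbers of `G(0,0;0,n)` and `G^bk(0,0;0,n)`
along even `n` (these limits exist by superadditivity). -/
def HasLLN (E : EnvData Ω P) (zt : Bool) (g gbk : ℝ) : Prop :=
  Tendsto (fun n : ℕ => (∫ e, Ghs E zt 0 0 0 (2 * (n : ℤ)) e ∂P) / (2 * (n : ℝ)))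
      atTop (nhds g) ∧
    Tendsto (fun n : ℕ => (∫ e, Gbk E zt 0 0 0 (2 * (n : ℤ)) e ∂P) / (2 * (n : ℝ)))
      atTop (nhds gbk)

/-- LLN separation: `g > g^bk`. -/
def LLNSep (E : EnvData Ω P) (zt : Bool) : Prop :=
  ∃ g gbk : ℝ, HasLLN E zt g gbk ∧ gbk < g

/-- Number of blocks: `N = sup {i : iK + J ≤ n}` for `n = 2m + 4`. -/
noncomputable def Nblk (J K : ℕ → ℤ) (m : ℕ) : ℕ :=
  sSup {i : ℕ | (i : ℤ) * K m + J m ≤ 2 * (m : ℤ) + 4}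

/-- Block boundaries: `m₀ = 0`, `mᵢ = iK + J` for `1 ≤ i ≤ N`, `m_{N+1} = n = 2m + 4`. -/
noncomputable def mpt (J K : ℕ → ℤ) (m : ℕ) (i : ℕ) : ℤ :=
  if i = 0 then 0 else if i ≤ Nblk J K m then (i : ℤ) * K m + J m else 2 * (m : ℤ) + 4

/-- The block free energies `Gᵢ⁰ = G(0,mᵢ;0,m_{i+1}) − ω(0,m_{i+1})` for `i < N`, and
`G_N⁰ = G(0,m_N;0,n)`. -/
noncomputable def Gblk (E : EnvData Ω P) (zt : Bool) (J K : ℕ → ℤ) (m i : ℕ) (e : Ω) : ℝ :=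
  Ghs E zt 0 (mpt J K m i) 0 (mpt J K m (i + 1)) e -
    (if i < Nblk J K m then E.w (0, mpt J K m (i + 1)) e else 0)

/-- Constraints on the block scales `J, K` for `n = 2m + 4`: `J, K` even,
`J^{1/4} ∈ [(log n)^{5/4}, 2 (log n)^{5/4}]` and `K ∈ [n^{0.9}, 2 n^{0.9}]`. -/
def BlockScales (J K : ℕ → ℤ) : Prop :=
  ∀ m : ℕ,
    Even (J m) ∧ Even (K m) ∧
    (Real.log (2 * (m : ℝ) + 4)) ^ ((5 : ℝ) / 4) ≤ ((J m : ℝ)) ^ ((1 : ℝ) / 4) ∧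
    ((J m : ℝ)) ^ ((1 : ℝ) / 4) ≤ 2 * (Real.log (2 * (m : ℝ) + 4)) ^ ((5 : ℝ) / 4) ∧
    (2 * (m : ℝ) + 4) ^ ((0.9 : ℝ)) ≤ (K m : ℝ) ∧
    (K m : ℝ) ≤ 2 * (2 * (m : ℝ) + 4) ^ ((0.9 : ℝ))

/-- The normalized triangular array `X_{N,i}` built from the block free energies. -/
noncomputable def Xblk (E : EnvData Ω P) (zt : Bool) (J K : ℕ → ℤ) (σ : ℕ → ℝ)
    (m i : ℕ) (e : Ω) : ℝ :=
  (Ghs E zt 0 (mpt J K m i) 0 (mpt J K m (i + 1)) e -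
      ∫ e', Ghs E zt 0 (mpt J K m i) 0 (mpt J K m (i + 1)) e' ∂P) /
    (σ m * Real.sqrt ((Nblk J K m : ℝ) * (K m : ℝ)))

/-! ### Auxiliary lemmas for the proof -/

section Aux

variable {x₁ t₁ x₂ t₂ : ℤ}

lemma FPath.bound_left (π : FPath x₁ t₁ x₂ t₂) (s : ℤ) (hs1 : t₁ ≤ s) :
    s ≤ t₂ → (x₁ - (s - t₁) ≤ π.f s ∧ π.f s ≤ x₁ + (s - t₁)) := by
  refine Int.le_induction (motive := fun s _ => s ≤ t₂ → (x₁ - (s - t₁) ≤ π.f s ∧ π.f s ≤ x₁ + (s - t₁))) ?_ ?_ s hs1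
  · intro _
    have hf : π.f t₁ = x₁ := π.eq_left t₁ le_rfl
    omega
  · intro n hn ih h2
    obtain ⟨a, b⟩ := ih (by omega)
    rcases π.step n hn (by omega) with h | h <;> omega

lemma FPath.bound_right (π : FPath x₁ t₁ x₂ t₂) (s : ℤ) (hs2 : s ≤ t₂) :
    t₁ ≤ s → (x₂ - (t₂ - s) ≤ π.f s ∧ π.f s ≤ x₂ + (t₂ - s)) := by
  refine Int.le_induction_down (motive := fun s _ => t₁ ≤ s → (x₂ - (t₂ - s) ≤ π.f s ∧ π.f s ≤ x₂ + (t₂ - s))) ?_ ?_ s hs2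
  · intro _
    have hf : π.f t₂ = x₂ := π.eq_right t₂ le_rfl
    omega
  · intro n hn ih h1
    obtain ⟨a, b⟩ := ih (by omega)
    rcases π.step (n - 1) h1 (by omega) with h | h <;>
      · rw [sub_add_cancel] at h; omega

lemma FPath.ext_f {π π' : FPath x₁ t₁ x₂ t₂} (h : π.f = π'.f) : π = π' := by
  cases π; cases π'; simpa using h

lemma FPath.ext_of_agree {π π' : FPath x₁ t₁ x₂ t₂}
    (h : ∀ s, t₁ ≤ s → s ≤ t₂ → π.f s = π'.f s) : π = π' := by
  apply FPath.ext_f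
  funext t
  rcases le_or_gt t t₁ with h1 | h1
  · rw [π.eq_left t h1, π'.eq_left t h1]
  rcases le_or_gt t₂ t with h2 | h2
  · rw [π.eq_right t h2, π'.eq_right t h2]
  exact h t (by omega) (by omega)

lemma HSPath.ext_f {π π' : HSPath x₁ t₁ x₂ t₂} (h : π.f = π'.f) : π = π' := by
  cases π; cases π'; simpa using h

/-- Forget the half-space constraint. -/
def HSPath.toF (π : HSPath x₁ t₁ x₂ t₂) : FPath x₁ t₁ x₂ t₂ :=
  ⟨π.f, π.eq_left, π.eq_right, π.step⟩

lemma HSPath.toF_injective :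
    Function.Injective (HSPath.toF : HSPath x₁ t₁ x₂ t₂ → FPath x₁ t₁ x₂ t₂) := by
  intro π π' h
  exact HSPath.ext_f (congrArg FPath.f h)

instance : Finite (FPath x₁ t₁ x₂ t₂) := by
  classical
  let g : FPath x₁ t₁ x₂ t₂ →
      ({s : ℤ // s ∈ Finset.Icc t₁ t₂} →
        {x : ℤ // x ∈ Finset.Icc (x₁ - (t₂ - t₁)) (x₁ + (t₂ - t₁))}) :=
    fun π s => ⟨π.f s, by
      have hs := Finset.mem_Icc.mp s.2
      have h := π.bound_left s hs.1 hs.2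
      exact Finset.mem_Icc.mpr ⟨by omega, by omega⟩⟩
  have hg : Function.Injective g := by
    intro π π' h
    apply FPath.ext_of_agree
    intro s hs1 hs2
    have := congrFun h ⟨s, Finset.mem_Icc.mpr ⟨hs1, hs2⟩⟩
    simpa [g] using this
  exact Finite.of_injective g hg

instance : Finite (HSPath x₁ t₁ x₂ t₂) := Finite.of_injective _ HSPath.toF_injective

noncomputable instance : Fintype (FPath x₁ t₁ x₂ t₂) := Fintype.ofFinite _

noncomputable instance : Fintype (HSPath x₁ t₁ x₂ t₂) := Fintype.ofFinite _

lemma HSPath.bound (π : HSPath x₁ t₁ x₂ t₂) (s : ℤ) (hs1 : t₁ ≤ s) (hs2 : s ≤ t₂) :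
    0 ≤ π.f s ∧ π.f s ≤ x₁ + (s - t₁) :=
  ⟨π.nonneg s, (π.toF.bound_left s hs1 hs2).2⟩

/-- A vertical zig-zag half-space path from `(x,a)` to `(x,b)`, `b - a` even. -/
def vertPath (x a b : ℤ) (hx : 0 ≤ x) (hab : a ≤ b) (he : (b - a) % 2 = 0) :
    HSPath x a x b where
  f := fun t => if a < t ∧ t < b then x + ((t - a) % 2) else x
  nonneg := by intro t; split_ifs <;> omega
  eq_left := by intro t ht; rw [if_neg (by omega)]
  eq_right := by intro t ht; rw [if_neg (by omega)]
  step := by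
    intro t ht1 ht2
    split_ifs <;> omega

/-- The diagonal half-space path from `(0,0)` to `(k,k)`. -/
def diagUp (k : ℤ) (hk : 0 ≤ k) : HSPath 0 0 k k where
  f := fun t => if t ≤ 0 then 0 else if t ≤ k then t else k
  nonneg := by intro t; split_ifs <;> omega
  eq_left := by intro t ht; rw [if_pos ht]
  eq_right := by intro t ht; split_ifs <;> omega
  step := by intro t ht1 ht2; split_ifs <;> omega

/-- The antidiagonal half-space path from `(k,a)` to `(0,a+k)`. -/
def diagDown (k a : ℤ) (hk : 0 ≤ k) : HSPath k a 0 (a + k) where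
  f := fun t => if t ≤ a then k else if t ≤ a + k then a + k - t else 0
  nonneg := by intro t; split_ifs <;> omega
  eq_left := by intro t ht; rw [if_pos ht]
  eq_right := by intro t ht; split_ifs <;> omega
  step := by intro t ht1 ht2; split_ifs <;> omega

end Aux

section GwSection

variable {x₁ t₁ x₂ t₂ : ℤ}

/-- Unified half-space quantity: `lpp` at zero temperature, `freeEnergy` otherwise. -/
noncomputable def Gw (zt : Bool) (wt : ℤ × ℤ → ℝ) (x₁ t₁ x₂ t₂ : ℤ) : ℝ :=
  if zt then lpp wt x₁ t₁ x₂ t₂ else freeEnergy wt x₁ t₁ x₂ t₂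

/-- Unified full-space quantity. -/
noncomputable def GwF (zt : Bool) (wt : ℤ × ℤ → ℝ) (x₁ t₁ x₂ t₂ : ℤ) : ℝ :=
  if zt then lppF wt x₁ t₁ x₂ t₂ else freeEnergyF wt x₁ t₁ x₂ t₂

lemma Gw_true (wt : ℤ × ℤ → ℝ) : Gw true wt x₁ t₁ x₂ t₂ = lpp wt x₁ t₁ x₂ t₂ := rfl

lemma Gw_false (wt : ℤ × ℤ → ℝ) : Gw false wt x₁ t₁ x₂ t₂ = freeEnergy wt x₁ t₁ x₂ t₂ := rfl

lemma lpp_le (wt : ℤ × ℤ → ℝ) [Nonempty (HSPath x₁ t₁ x₂ t₂)] {c : ℝ}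
    (h : ∀ π : HSPath x₁ t₁ x₂ t₂, energy wt π ≤ c) : lpp wt x₁ t₁ x₂ t₂ ≤ c :=
  ciSup_le h

lemma le_lpp (wt : ℤ × ℤ → ℝ) (π : HSPath x₁ t₁ x₂ t₂) :
    energy wt π ≤ lpp wt x₁ t₁ x₂ t₂ :=
  le_ciSup (Set.Finite.bddAbove (Set.finite_range _)) π

variable {Ω : Type*} [MeasurableSpace Ω] {P : Measure Ω}

lemma Gbk_eq_Gw (E : EnvData Ω P) (zt : Bool) (x₁ t₁ x₂ t₂ : ℤ) (e : Ω) :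
    Gbk E zt x₁ t₁ x₂ t₂ e = Gw zt (fun v => E.wbk v e) x₁ t₁ x₂ t₂ := rfl

lemma GbkF_eq_GwF (E : EnvData Ω P) (zt : Bool) (x₁ t₁ x₂ t₂ : ℤ) (e : Ω) :
    GbkF E zt x₁ t₁ x₂ t₂ e = GwF zt (fun v => E.wbk v e) x₁ t₁ x₂ t₂ := rfl

lemma Zfun_eq_sum (wt : ℤ × ℤ → ℝ) :
    Zfun wt x₁ t₁ x₂ t₂ = ∑ π : HSPath x₁ t₁ x₂ t₂, Real.exp (energy wt π) :=
  tsum_fintype _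

lemma Zfun_pos (wt : ℤ × ℤ → ℝ) [Nonempty (HSPath x₁ t₁ x₂ t₂)] :
    0 < Zfun wt x₁ t₁ x₂ t₂ := by
  rw [Zfun_eq_sum]
  exact Finset.sum_pos (fun π _ => Real.exp_pos _) Finset.univ_nonempty

lemma energy_le_Gw (zt : Bool) (wt : ℤ × ℤ → ℝ) (π : HSPath x₁ t₁ x₂ t₂) :
    energy wt π ≤ Gw zt wt x₁ t₁ x₂ t₂ := by
  have : Nonempty (HSPath x₁ t₁ x₂ t₂) := ⟨π⟩
  cases zt with
  | true =>
    exact le_lpp wt π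
  | false =>
    rw [Gw_false, freeEnergy, Real.le_log_iff_exp_le (Zfun_pos wt)]
    rw [Zfun_eq_sum]
    exact Finset.single_le_sum (fun i _ => (Real.exp_pos (energy wt i)).le)
      (Finset.mem_univ π)

lemma Gw_le (zt : Bool) (wt : ℤ × ℤ → ℝ) [Nonempty (HSPath x₁ t₁ x₂ t₂)] {c : ℝ}
    (h : ∀ π : HSPath x₁ t₁ x₂ t₂, energy wt π ≤ c) :
    Gw zt wt x₁ t₁ x₂ t₂ ≤ c + Real.log (Fintype.card (HSPath x₁ t₁ x₂ t₂)) := by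
  have hcard : (1 : ℝ) ≤ (Fintype.card (HSPath x₁ t₁ x₂ t₂) : ℝ) := by
    exact_mod_cast Fintype.card_pos
  have hlog : 0 ≤ Real.log (Fintype.card (HSPath x₁ t₁ x₂ t₂) : ℝ) := Real.log_nonneg hcard
  cases zt with
  | true =>
    have : lpp wt x₁ t₁ x₂ t₂ ≤ c := lpp_le wt h
    rw [Gw_true]
    linarith
  | false =>
    rw [Gw_false, freeEnergy]
    have hZ : Zfun wt x₁ t₁ x₂ t₂ ≤ (Fintype.card (HSPath x₁ t₁ x₂ t₂) : ℝ) * Real.exp c := by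
      rw [Zfun_eq_sum]
      calc ∑ π : HSPath x₁ t₁ x₂ t₂, Real.exp (energy wt π)
          ≤ ∑ _π : HSPath x₁ t₁ x₂ t₂, Real.exp c :=
            Finset.sum_le_sum fun π _ => Real.exp_le_exp.mpr (h π)
        _ = (Fintype.card (HSPath x₁ t₁ x₂ t₂) : ℝ) * Real.exp c := by
            rw [Finset.sum_const, Finset.card_univ, nsmul_eq_mul]
    calc Real.log (Zfun wt x₁ t₁ x₂ t₂)
        ≤ Real.log ((Fintype.card (HSPath x₁ t₁ x₂ t₂) : ℝ) * Real.exp c) :=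
          Real.log_le_log (Zfun_pos wt) hZ
      _ = Real.log (Fintype.card (HSPath x₁ t₁ x₂ t₂) : ℝ) + c := by
          rw [Real.log_mul (by positivity) (Real.exp_ne_zero c), Real.log_exp]
      _ = c + Real.log (Fintype.card (HSPath x₁ t₁ x₂ t₂) : ℝ) := by ring

/-- Concatenation of half-space paths. -/
def HSPath.concat {x y z a b c : ℤ} (π₁ : HSPath x a y b) (π₂ : HSPath y b z c)
    (hab : a ≤ b) (hbc : b ≤ c) : HSPath x a z c where
  f := fun t => if t ≤ b then π₁.f t else π₂.f t
  nonneg := by intro t; split_ifs; exacts [π₁.nonneg t, π₂.nonneg t]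
  eq_left := by
    intro t ht; rw [if_pos (by omega)]; exact π₁.eq_left t ht
  eq_right := by
    intro t ht
    split_ifs with h
    · have hbc' : b = c := le_antisymm hbc (by omega)
      have h1 := π₂.eq_left b le_rfl
      have h2 := π₂.eq_right b (by omega)
      have h3 := π₁.eq_right t (by omega)
      omega
    · exact π₂.eq_right t ht
  step := by
    intro t ht1 ht2
    rcases le_or_gt (t + 1) b with h | h
    · rw [if_pos h, if_pos (by omega)]
      exact π₁.step t ht1 (by omega)
    · rw [if_neg (by omega)]
      rcases eq_or_lt_of_le (show b ≤ t by omega) with hb | hb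
      · rw [if_pos (by omega)]
        subst hb
        have h1 := π₂.eq_left b le_rfl
        have h2 := π₁.eq_right b le_rfl
        rcases π₂.step b le_rfl ht2 with h' | h' <;> omega
      · rw [if_neg (by omega)]
        exact π₂.step t (by omega) ht2

lemma energy_concat (wt : ℤ × ℤ → ℝ) {x y z a b c : ℤ}
    (π₁ : HSPath x a y b) (π₂ : HSPath y b z c) (hab : a ≤ b) (hbc : b ≤ c) :
    energy wt (π₁.concat π₂ hab hbc) = energy wt π₁ + energy wt π₂ - wt (y, b) := by
  have hsplit : Finset.Icc a c = Finset.Icc a b ∪ Finset.Ioc b c := by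
    ext s; simp only [Finset.mem_Icc, Finset.mem_union, Finset.mem_Ioc]; omega
  have hdisj : Disjoint (Finset.Icc a b) (Finset.Ioc b c) := by
    rw [Finset.disjoint_left]
    intro s hs1 hs2
    simp only [Finset.mem_Icc] at hs1
    simp only [Finset.mem_Ioc] at hs2
    omega
  have h2 : ∑ s ∈ Finset.Icc b c, wt (π₂.f s, s)
      = wt (y, b) + ∑ s ∈ Finset.Ioc b c, wt (π₂.f s, s) := by
    rw [← Finset.Ioc_insert_left hbc, Finset.sum_insert (by simp)]
    rw [π₂.eq_left b le_rfl]
  unfold energy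
  rw [hsplit, Finset.sum_union hdisj]
  have e1 : ∑ s ∈ Finset.Icc a b, wt ((π₁.concat π₂ hab hbc).f s, s)
      = ∑ s ∈ Finset.Icc a b, wt (π₁.f s, s) := by
    refine Finset.sum_congr rfl fun s hs => ?_
    have := (Finset.mem_Icc.mp hs).2
    simp only [HSPath.concat, if_pos this]
  have e2 : ∑ s ∈ Finset.Ioc b c, wt ((π₁.concat π₂ hab hbc).f s, s)
      = ∑ s ∈ Finset.Ioc b c, wt (π₂.f s, s) := by
    refine Finset.sum_congr rfl fun s hs => ?_
    have := (Finset.mem_Ioc.mp hs).1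
    simp only [HSPath.concat, if_neg (by omega : ¬ s ≤ b)]
  rw [e1, e2, h2]
  ring

lemma concat_injective (wt : ℤ × ℤ → ℝ) {x y z a b c : ℤ} (hab : a ≤ b) (hbc : b ≤ c) :
    Function.Injective (fun p : HSPath x a y b × HSPath y b z c =>
      p.1.concat p.2 hab hbc) := by
  intro p q h
  have hf : ∀ t, (if t ≤ b then p.1.f t else p.2.f t) = (if t ≤ b then q.1.f t else q.2.f t) :=
    fun t => congrFun (congrArg HSPath.f h) t
  have h1 : p.1 = q.1 := by
    apply HSPath.ext_f; funext t
    rcases le_or_gt t b with ht | ht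
    · have := hf t; rwa [if_pos ht, if_pos ht] at this
    · rw [p.1.eq_right t (by omega), q.1.eq_right t (by omega)]
  have h2 : p.2 = q.2 := by
    apply HSPath.ext_f; funext t
    rcases le_or_gt t b with ht | ht
    · rw [p.2.eq_left t ht, q.2.eq_left t ht]
    · have := hf t; rwa [if_neg (by omega), if_neg (by omega)] at this
  exact Prod.ext h1 h2

lemma Gw_concat (zt : Bool) (wt : ℤ × ℤ → ℝ) {x y z a b c : ℤ}
    (hab : a ≤ b) (hbc : b ≤ c)
    [Nonempty (HSPath x a y b)] [Nonempty (HSPath y b z c)] :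
    Gw zt wt x a y b + Gw zt wt y b z c - wt (y, b) ≤ Gw zt wt x a z c := by
  have key : ∀ (π₁ : HSPath x a y b) (π₂ : HSPath y b z c),
      energy wt π₁ + energy wt π₂ - wt (y, b) ≤ Gw zt wt x a z c := by
    intro π₁ π₂
    have := energy_le_Gw zt wt (π₁.concat π₂ hab hbc)
    rw [energy_concat wt π₁ π₂ hab hbc] at this
    exact this
  cases zt with
  | true =>
    simp only [Gw_true] at key ⊢
    have h1 : lpp wt x a y b ≤ lpp wt x a z c + wt (y, b) - lpp wt y b z c := by
      refine lpp_le wt fun π₁ => ?_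
      have h2 : lpp wt y b z c ≤ lpp wt x a z c + wt (y, b) - energy wt π₁ :=
        lpp_le wt fun π₂ => by linarith [key π₁ π₂]
      linarith
    linarith
  | false =>
    simp only [Gw_false, freeEnergy] at key ⊢
    have hprod : Zfun wt x a y b * Zfun wt y b z c * Real.exp (-wt (y, b))
        = ∑ p : HSPath x a y b × HSPath y b z c,
            Real.exp (energy wt (p.1.concat p.2 hab hbc)) := by
      rw [Fintype.sum_prod_type, Zfun_eq_sum (x₁ := x), Zfun_eq_sum (x₁ := y)]
      rw [Finset.sum_mul_sum, Finset.sum_mul]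
      refine Finset.sum_congr rfl fun π₁ _ => ?_
      rw [Finset.sum_mul]
      refine Finset.sum_congr rfl fun π₂ _ => ?_
      rw [energy_concat wt π₁ π₂ hab hbc, ← Real.exp_add, ← Real.exp_add]
      ring_nf
    have himg : ∑ p : HSPath x a y b × HSPath y b z c,
        Real.exp (energy wt (p.1.concat p.2 hab hbc))
        ≤ ∑ π : HSPath x a z c, Real.exp (energy wt π) := by
      classical
      rw [← Finset.sum_image
        (g := fun p : HSPath x a y b × HSPath y b z c => p.1.concat p.2 hab hbc)
        (f := fun π => Real.exp (energy wt π))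
        (fun p _ q _ hpq => concat_injective wt hab hbc hpq)]
      exact Finset.sum_le_sum_of_subset_of_nonneg (Finset.subset_univ _)
        fun π _ _ => (Real.exp_pos _).le
    have hZ : Zfun wt x a y b * Zfun wt y b z c * Real.exp (-wt (y, b))
        ≤ Zfun wt x a z c := by
      rw [hprod, Zfun_eq_sum]
      exact himg
    have hZ1 := Zfun_pos (x₁ := x) (t₁ := a) (x₂ := y) (t₂ := b) wt
    have hZ2 := Zfun_pos (x₁ := y) (t₁ := b) (x₂ := z) (t₂ := c) wt
    have hZ3 : (0:ℝ) < Zfun wt x a y b * Zfun wt y b z c * Real.exp (-wt (y, b)) := by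
      positivity
    calc Real.log (Zfun wt x a y b) + Real.log (Zfun wt y b z c) - wt (y, b)
        = Real.log (Zfun wt x a y b * Zfun wt y b z c * Real.exp (-wt (y, b))) := by
          rw [Real.log_mul (by positivity) (Real.exp_ne_zero _),
            Real.log_mul hZ1.ne' hZ2.ne', Real.log_exp]
          ring
      _ ≤ Real.log (Zfun wt x a z c) := Real.log_le_log hZ3 hZ

end GwSection

section Boxes

variable {x₁ t₁ x₂ t₂ : ℤ}

/-- The dependence box of the half-space polymer from `(x₁,t₁)` to `(x₂,t₂)`. -/
noncomputable def boxOf (x₁ t₁ t₂ : ℤ) : Finset (ℤ × ℤ) :=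
  Finset.Icc 0 (x₁ + (t₂ - t₁)) ×ˢ Finset.Icc t₁ t₂

lemma site_mem_boxOf (π : HSPath x₁ t₁ x₂ t₂) {s : ℤ} (hs : s ∈ Finset.Icc t₁ t₂) :
    (π.f s, s) ∈ boxOf x₁ t₁ t₂ := by
  rw [Finset.mem_Icc] at hs
  have hb := π.bound s hs.1 hs.2
  simp only [boxOf, Finset.mem_product, Finset.mem_Icc]
  exact ⟨⟨hb.1, by omega⟩, hs⟩

lemma energy_congr {wt wt' : ℤ × ℤ → ℝ} (h : ∀ v ∈ boxOf x₁ t₁ t₂, wt v = wt' v)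
    (π : HSPath x₁ t₁ x₂ t₂) : energy wt π = energy wt' π :=
  Finset.sum_congr rfl fun _s hs => h _ (site_mem_boxOf π hs)

lemma Gw_congr (zt : Bool) {wt wt' : ℤ × ℤ → ℝ}
    (h : ∀ v ∈ boxOf x₁ t₁ t₂, wt v = wt' v) :
    Gw zt wt x₁ t₁ x₂ t₂ = Gw zt wt' x₁ t₁ x₂ t₂ := by
  have he : ∀ π : HSPath x₁ t₁ x₂ t₂, energy wt π = energy wt' π :=
    fun π => energy_congr h π
  cases zt
  · simp only [Gw_false, freeEnergy, Zfun]
    congr 1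
    exact tsum_congr fun π => by rw [he π]
  · simp only [Gw_true, lpp]
    simp only [he]

/-- The environment on the box, extended by zero. -/
def extEnv (B : Finset (ℤ × ℤ)) (g : {v // v ∈ B} → ℝ) : ℤ × ℤ → ℝ :=
  fun v => if h : v ∈ B then g ⟨v, h⟩ else 0

/-- The half-space quantity as a function of the weights in the box. -/
noncomputable def Psi (zt : Bool) (x₁ t₁ x₂ t₂ : ℤ)
    (g : {v // v ∈ boxOf x₁ t₁ t₂} → ℝ) : ℝ :=
  Gw zt (extEnv (boxOf x₁ t₁ t₂) g) x₁ t₁ x₂ t₂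

lemma Gw_eq_Psi (zt : Bool) (wt : ℤ × ℤ → ℝ) :
    Gw zt wt x₁ t₁ x₂ t₂ = Psi zt x₁ t₁ x₂ t₂ (fun i => wt i.1) :=
  Gw_congr zt fun v hv => by simp [extEnv, hv]

lemma continuous_finset_sup' {X ι : Type*} [TopologicalSpace X] (s : Finset ι)
    (hs : s.Nonempty) {F : ι → X → ℝ} (hF : ∀ i, Continuous (F i)) :
    Continuous fun x => s.sup' hs fun i => F i x := by
  induction hs using Finset.Nonempty.cons_induction with
  | singleton a => simpa using hF a
  | cons a s ha hs ih =>
    have : Continuous fun x => F a x ⊔ s.sup' hs fun i => F i x := (hF a).sup ih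
    simpa only [Finset.sup'_cons hs] using this

lemma continuous_Psi (zt : Bool) (x₁ t₁ x₂ t₂ : ℤ) [Nonempty (HSPath x₁ t₁ x₂ t₂)] :
    Continuous (Psi zt x₁ t₁ x₂ t₂) := by
  have hen : ∀ π : HSPath x₁ t₁ x₂ t₂,
      Continuous fun g : {v // v ∈ boxOf x₁ t₁ t₂} → ℝ =>
        energy (extEnv (boxOf x₁ t₁ t₂) g) π := by
    intro π
    unfold energy extEnv
    refine continuous_finset_sum _ fun s _hs => ?_
    by_cases h : ((π.f s, s) : ℤ × ℤ) ∈ boxOf x₁ t₁ t₂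
    · simpa [h] using continuous_apply (⟨(π.f s, s), h⟩ : {v // v ∈ boxOf x₁ t₁ t₂})
    · simp only [dif_neg h]
      exact continuous_const
  cases zt
  · have hZ : Continuous fun g : {v // v ∈ boxOf x₁ t₁ t₂} → ℝ =>
        Zfun (extEnv (boxOf x₁ t₁ t₂) g) x₁ t₁ x₂ t₂ := by
      simp only [Zfun_eq_sum]
      exact continuous_finset_sum _ fun π _ => Real.continuous_exp.comp (hen π)
    have : Psi false x₁ t₁ x₂ t₂ = fun g =>
        Real.log (Zfun (extEnv (boxOf x₁ t₁ t₂) g) x₁ t₁ x₂ t₂) := rfl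
    rw [this]
    exact hZ.log fun g => (Zfun_pos _).ne'
  · have : Psi true x₁ t₁ x₂ t₂ = fun g => Finset.univ.sup' Finset.univ_nonempty
        (fun π : HSPath x₁ t₁ x₂ t₂ => energy (extEnv (boxOf x₁ t₁ t₂) g) π) := by
      funext g
      simp only [Psi, Gw_true, lpp]
      exact (Finset.sup'_univ_eq_ciSup _).symm
    rw [this]
    exact continuous_finset_sup' _ _ hen

lemma ciSup_equiv {A B : Type*} (e : A ≃ B) (g : B → ℝ) : (⨆ a, g (e a)) = ⨆ b, g b := by
  show sSup (Set.range fun a => g (e a)) = sSup (Set.range g)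
  congr 1
  exact e.surjective.range_comp g

/-- Time translation of half-space paths. -/
def timeShiftEquiv (a : ℤ) : HSPath x₁ t₁ x₂ t₂ ≃ HSPath x₁ (t₁ + a) x₂ (t₂ + a) where
  toFun π := ⟨fun t => π.f (t - a),
    fun t => π.nonneg _,
    fun t ht => π.eq_left _ (by omega),
    fun t ht => π.eq_right _ (by omega),
    fun t ht1 ht2 => by
      have := π.step (t - a) (by omega) (by omega)
      simpa only [show t + 1 - a = t - a + 1 from by ring] using this⟩
  invFun π := ⟨fun t => π.f (t + a),
    fun t => π.nonneg _,
    fun t ht => π.eq_left _ (by omega),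
    fun t ht => π.eq_right _ (by omega),
    fun t ht1 ht2 => by
      have := π.step (t + a) (by omega) (by omega)
      simpa only [show t + a + 1 = t + 1 + a from by ring] using this⟩
  left_inv π := HSPath.ext_f (funext fun t => by simp)
  right_inv π := HSPath.ext_f (funext fun t => by simp)

lemma energy_timeShift (wt : ℤ × ℤ → ℝ) (a : ℤ) (π : HSPath x₁ t₁ x₂ t₂) :
    energy wt ((timeShiftEquiv a) π) = energy (fun v => wt (v.1, v.2 + a)) π := by
  unfold energy
  rw [← Finset.map_add_right_Icc t₁ t₂ a, Finset.sum_map]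
  refine Finset.sum_congr rfl fun u _hu => ?_
  simp [timeShiftEquiv, addRightEmbedding]

lemma Gw_timeShift (zt : Bool) (wt : ℤ × ℤ → ℝ) (a : ℤ) :
    Gw zt wt x₁ (t₁ + a) x₂ (t₂ + a) = Gw zt (fun v => wt (v.1, v.2 + a)) x₁ t₁ x₂ t₂ := by
  cases zt
  · simp only [Gw_false, freeEnergy]
    congr 1
    rw [Zfun_eq_sum, Zfun_eq_sum,
      ← Equiv.sum_comp (timeShiftEquiv a : HSPath x₁ t₁ x₂ t₂ ≃ _)
        (fun σ => Real.exp (energy wt σ))]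
    exact Finset.sum_congr rfl fun π _ => by rw [energy_timeShift wt a π]
  · simp only [Gw_true, lpp]
    rw [← ciSup_equiv (timeShiftEquiv a : HSPath x₁ t₁ x₂ t₂ ≃ _)
      (fun σ => energy wt σ)]
    simp only [energy_timeShift wt a]

/-- Representation of a vertical block at abscissa `k` as a function of the shifted
box weights. -/
lemma Gw_block_rep (zt : Bool) (wt : ℤ × ℤ → ℝ) (k a : ℤ) :
    Gw zt wt k a k (2 * k + a) = Psi zt k 0 k (2 * k)
      (fun i => wt (i.1.1, i.1.2 + a)) := by
  have h0 : (a : ℤ) = 0 + a := by ring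
  rw [show Gw zt wt k a k (2 * k + a) = Gw zt wt k (0 + a) k (2 * k + a) by rw [← h0]]
  rw [Gw_timeShift zt wt a, Gw_eq_Psi]

/-- Full-space paths from `(0,0)` to `(0,2k)`, shifted right by `k`, are exactly the
half-space paths from `(k,0)` to `(k,2k)`. -/
def fullToHalf (k : ℤ) (hk : 0 ≤ k) : FPath 0 0 0 (2 * k) ≃ HSPath k 0 k (2 * k) where
  toFun π := ⟨fun t => π.f t + k,
    by
      intro t
      rcases le_or_gt t 0 with ht | ht
      · have := π.eq_left t ht; omega
      rcases le_or_gt (2 * k) t with ht2 | ht2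
      · have := π.eq_right t ht2; omega
      rcases le_or_gt t k with ht3 | ht3
      · have := (π.bound_left t (by omega)) (by omega); omega
      · have := (π.bound_right t (by omega)) (by omega); omega,
    fun t ht => by rw [π.eq_left t ht]; ring,
    fun t ht => by rw [π.eq_right t ht]; ring,
    fun t ht1 ht2 => by
      rcases π.step t ht1 ht2 with h | h
      · left; omega
      · right; omega⟩
  invFun σ := ⟨fun t => σ.f t - k,
    fun t ht => by rw [σ.eq_left t ht]; ring,
    fun t ht => by rw [σ.eq_right t ht]; ring,
    fun t ht1 ht2 => by
      rcases σ.step t ht1 ht2 with h | h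
      · left; omega
      · right; omega⟩
  left_inv π := FPath.ext_f (funext fun t => by simp)
  right_inv π := HSPath.ext_f (funext fun t => by simp)

lemma energyF_fullToHalf (wt : ℤ × ℤ → ℝ) (k : ℤ) (hk : 0 ≤ k)
    (π : FPath 0 0 0 (2 * k)) :
    energy (fun v => wt (v.1 - k, v.2)) ((fullToHalf k hk) π) = energyF wt π := by
  unfold energy energyF
  refine Finset.sum_congr rfl fun s _hs => ?_
  simp [fullToHalf]

lemma GwF_true (wt : ℤ × ℤ → ℝ) : GwF true wt x₁ t₁ x₂ t₂ = lppF wt x₁ t₁ x₂ t₂ := rfl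

lemma GwF_false (wt : ℤ × ℤ → ℝ) :
    GwF false wt x₁ t₁ x₂ t₂ = freeEnergyF wt x₁ t₁ x₂ t₂ := rfl

lemma GwF_eq_Gw_shift (zt : Bool) (wt : ℤ × ℤ → ℝ) (k : ℤ) (hk : 0 ≤ k) :
    GwF zt wt 0 0 0 (2 * k) = Gw zt (fun v => wt (v.1 - k, v.2)) k 0 k (2 * k) := by
  cases zt
  · simp only [GwF_false, Gw_false, freeEnergyF, freeEnergy]
    congr 1
    rw [Zfun_eq_sum, tsum_fintype,
      ← Equiv.sum_comp (fullToHalf k hk) (fun σ => Real.exp (energy (fun v => wt (v.1 - k, v.2)) σ))]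
    exact Finset.sum_congr rfl fun π _ => by rw [energyF_fullToHalf wt k hk π]
  · simp only [GwF_true, Gw_true, lppF, lpp]
    rw [← ciSup_equiv (fullToHalf k hk) (fun σ => energy (fun v => wt (v.1 - k, v.2)) σ)]
    simp only [energyF_fullToHalf wt k hk]

lemma GwF_rep (zt : Bool) (wt : ℤ × ℤ → ℝ) (k : ℤ) (hk : 0 ≤ k) :
    GwF zt wt 0 0 0 (2 * k) = Psi zt k 0 k (2 * k)
      (fun i => wt (i.1.1 - k, i.1.2)) := by
  rw [GwF_eq_Gw_shift zt wt k hk, Gw_eq_Psi]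

end Boxes

section MeasureAux

variable {Ω' : Type*} [MeasurableSpace Ω'] {P : Measure Ω'} [IsProbabilityMeasure P]

/-- Reindexing of sites into the globally independent family. -/
def rho (v : ℤ × ℤ) : (ℤ × ℤ) ⊕ ℤ := if v.1 = 0 then Sum.inr v.2 else Sum.inl v

lemma rho_injective : Function.Injective rho := by
  intro v w h
  unfold rho at h
  by_cases h1 : v.1 = 0 <;> by_cases h2 : w.1 = 0 <;> simp [h1, h2] at h
  · exact Prod.ext (h1.trans h2.symm) h
  · exact h

lemma wbk_eq_elim (E : EnvData Ω' P) (v : ℤ × ℤ) :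
    E.wbk v = Sum.elim E.w (fun t => E.wbk (0, t)) (rho v) := by
  unfold rho
  split_ifs with h
  · simp only [Sum.elim_inr]
    rw [show ((0 : ℤ), v.2) = v from Prod.ext h.symm rfl]
  · simp only [Sum.elim_inl]
    exact E.agree v h

lemma jointLaw (E : EnvData Ω' P) {ι : Type*} [Fintype ι] (ν : ι → ℤ × ℤ)
    (hν : Function.Injective ν) :
    P.map (fun e (i : ι) => E.wbk (ν i) e) = Measure.pi (fun _ : ι => E.μbk) := by
  classical
  haveI := E.prob_bk
  have hT : Measurable (fun e (i : ι) => E.wbk (ν i) e) :=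
    measurable_pi_lambda _ fun i => E.meas_wbk (ν i)
  refine (Measure.pi_eq fun s hs => ?_).symm
  rw [Measure.map_apply hT (MeasurableSet.univ_pi hs)]
  have hρν : Function.Injective fun i : ι => rho (ν i) :=
    fun i j h => hν (rho_injective h)
  set sets : ((ℤ × ℤ) ⊕ ℤ) → Set ℝ := fun j =>
    if h : ∃ i : ι, rho (ν i) = j then s h.choose else Set.univ with hsets_def
  have hsets : ∀ i : ι, sets (rho (ν i)) = s i := by
    intro i
    have hex : ∃ i' : ι, rho (ν i') = rho (ν i) := ⟨i, rfl⟩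
    simp only [hsets_def, dif_pos hex]
    exact congrArg s (hρν hex.choose_spec)
  have hmeas : ∀ j ∈ Finset.univ.image (fun i : ι => rho (ν i)),
      MeasurableSet (sets j) := by
    intro j hj
    simp only [Finset.mem_image, Finset.mem_univ, true_and] at hj
    obtain ⟨i, rfl⟩ := hj
    rw [hsets i]
    exact hs i
  have hmain := E.indep.measure_inter_preimage_eq_mul
    (Finset.univ.image (fun i : ι => rho (ν i))) hmeas
  have hX : ∀ i : ι,
      Sum.elim E.w (fun t => E.wbk (0, t)) (rho (ν i)) ⁻¹' sets (rho (ν i))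
        = E.wbk (ν i) ⁻¹' s i := by
    intro i
    rw [← wbk_eq_elim E (ν i), hsets i]
  have hpre : (fun e (i : ι) => E.wbk (ν i) e) ⁻¹' Set.pi Set.univ s
      = ⋂ j ∈ Finset.univ.image (fun i : ι => rho (ν i)),
          Sum.elim E.w (fun t => E.wbk (0, t)) j ⁻¹' sets j := by
    ext e
    simp only [Set.mem_preimage, Set.mem_pi, Set.mem_univ, true_implies,
      Set.mem_iInter, Finset.mem_image, Finset.mem_univ, true_and]
    constructor
    · rintro h j ⟨i, rfl⟩
      show Sum.elim E.w (fun t => E.wbk (0, t)) (rho (ν i)) e ∈ sets (rho (ν i))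
      rw [← Set.mem_preimage, hX i, Set.mem_preimage]
      exact h i
    · intro h i
      have h2 := h (rho (ν i)) ⟨i, rfl⟩
      rwa [← Set.mem_preimage, hX i, Set.mem_preimage] at h2
  rw [hpre, hmain, Finset.prod_image (fun i _ j _ h => hρν h)]
  refine Finset.prod_congr rfl fun i _ => ?_
  rw [hX i, ← Measure.map_apply (E.meas_wbk (ν i)) (hs i), E.law_wbk (ν i)]

lemma integral_Psi_comp (E : EnvData Ω' P) {ι : Type*} [Fintype ι] (ν : ι → ℤ × ℤ)
    (hν : Function.Injective ν) (Φ : (ι → ℝ) → ℝ) (hΦ : Measurable Φ) :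
    ∫ e, Φ (fun i => E.wbk (ν i) e) ∂P
      = ∫ g, Φ g ∂(Measure.pi fun _ : ι => E.μbk) := by
  rw [← jointLaw E ν hν,
    integral_map (measurable_pi_lambda _ fun i => E.meas_wbk (ν i)).aemeasurable
      hΦ.aestronglyMeasurable]

lemma wbk_ae_pos (E : EnvData Ω' P) (v : ℤ × ℤ) : ∀ᵐ e ∂P, 0 < E.wbk v e := by
  have h0 : P (E.wbk v ⁻¹' Set.Iic 0) = 0 := by
    rw [← Measure.map_apply (E.meas_wbk v) measurableSet_Iic, E.law_wbk]
    exact E.pos_bk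
  rw [ae_iff]
  convert h0 using 2
  ext e
  simp [not_lt]

lemma int_wbk (E : EnvData Ω' P) (v : ℤ × ℤ) : Integrable (E.wbk v) P := by
  obtain ⟨z, hz, hint⟩ := E.subexp_bk
  have h1 : Integrable (fun e => Real.exp (z * E.wbk v e)) P := by
    have := (integrable_map_measure (μ := P) (f := E.wbk v)
      (g := fun x => Real.exp (z * x)) ?_ (E.meas_wbk v).aemeasurable).mp ?_
    · exact this
    · rw [E.law_wbk]; exact hint.aestronglyMeasurable
    · rw [E.law_wbk]; exact hint
  refine Integrable.mono' (h1.div_const z) (E.meas_wbk v).aestronglyMeasurable ?_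
  filter_upwards [wbk_ae_pos E v] with e he
  rw [Real.norm_eq_abs, abs_of_pos he]
  have := Real.add_one_le_exp (z * E.wbk v e)
  rw [le_div_iff₀ hz]
  nlinarith

lemma integral_wbk (E : EnvData Ω' P) (v : ℤ × ℤ) :
    ∫ e, E.wbk v e ∂P = ∫ x, x ∂E.μbk := by
  rw [← E.law_wbk v]
  exact (integral_map (f := fun x => x) (E.meas_wbk v).aemeasurable
    measurable_id.aestronglyMeasurable).symm

lemma mu0_nonneg (E : EnvData Ω' P) : 0 ≤ ∫ x, x ∂E.μbk := by
  have h : ∀ᵐ x ∂E.μbk, 0 ≤ x := by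
    rw [ae_iff]
    refine measure_mono_null ?_ E.pos_bk
    intro x hx
    simp only [Set.mem_setOf_eq, not_le] at hx
    exact Set.mem_Iic.mpr hx.le
  exact integral_nonneg_of_ae h

end MeasureAux

section IntegrabilityAux

variable {Ω' : Type*} [MeasurableSpace Ω'] {P : Measure Ω'} [IsProbabilityMeasure P]
variable {x₁ t₁ x₂ t₂ : ℤ}

lemma abs_energy_le (wt : ℤ × ℤ → ℝ) (π : HSPath x₁ t₁ x₂ t₂) :
    |energy wt π| ≤ ∑ v ∈ boxOf x₁ t₁ t₂, |wt v| := by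
  classical
  calc |energy wt π| ≤ ∑ s ∈ Finset.Icc t₁ t₂, |wt (π.f s, s)| :=
        Finset.abs_sum_le_sum_abs _ _
    _ = ∑ v ∈ (Finset.Icc t₁ t₂).image (fun s => (π.f s, s)), |wt v| := by
        rw [Finset.sum_image (fun s _ u _ h => by simpa using (Prod.ext_iff.mp h).2)]
    _ ≤ ∑ v ∈ boxOf x₁ t₁ t₂, |wt v| := by
        refine Finset.sum_le_sum_of_subset_of_nonneg ?_ fun v _ _ => abs_nonneg _
        intro v hv
        simp only [Finset.mem_image] at hv
        obtain ⟨s, hs, rfl⟩ := hv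
        exact site_mem_boxOf π hs

lemma abs_Gw_le (zt : Bool) (wt : ℤ × ℤ → ℝ) [Nonempty (HSPath x₁ t₁ x₂ t₂)] :
    |Gw zt wt x₁ t₁ x₂ t₂| ≤ Real.log (Fintype.card (HSPath x₁ t₁ x₂ t₂))
      + ∑ v ∈ boxOf x₁ t₁ t₂, |wt v| := by
  have hlog : 0 ≤ Real.log (Fintype.card (HSPath x₁ t₁ x₂ t₂) : ℝ) :=
    Real.log_nonneg (by exact_mod_cast Fintype.card_pos)
  rw [abs_le]
  constructor
  · obtain ⟨π⟩ := (inferInstance : Nonempty (HSPath x₁ t₁ x₂ t₂))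
    have h1 := energy_le_Gw zt wt π
    have h2 := abs_energy_le wt π
    have h3 := abs_nonneg (energy wt π)
    have h4 := neg_abs_le (energy wt π)
    linarith
  · have := Gw_le (x₂ := x₂) zt wt (c := ∑ v ∈ boxOf x₁ t₁ t₂, |wt v|)
      fun π => le_trans (le_abs_self _) (abs_energy_le wt π)
    linarith

lemma measurable_Gw_env (E : EnvData Ω' P) (zt : Bool) (x₁ t₁ x₂ t₂ : ℤ)
    [Nonempty (HSPath x₁ t₁ x₂ t₂)] :
    Measurable (fun e => Gw zt (fun v => E.wbk v e) x₁ t₁ x₂ t₂) := by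
  have : (fun e => Gw zt (fun v => E.wbk v e) x₁ t₁ x₂ t₂)
      = fun e => Psi zt x₁ t₁ x₂ t₂ (fun i => E.wbk i.1 e) :=
    funext fun e => Gw_eq_Psi zt _
  rw [this]
  exact ((continuous_Psi zt x₁ t₁ x₂ t₂).measurable).comp
    (measurable_pi_lambda _ fun i => E.meas_wbk i.1)

lemma integrable_Gw_env (E : EnvData Ω' P) (zt : Bool) (x₁ t₁ x₂ t₂ : ℤ)
    [Nonempty (HSPath x₁ t₁ x₂ t₂)] :
    Integrable (fun e => Gw zt (fun v => E.wbk v e) x₁ t₁ x₂ t₂) P := by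
  refine Integrable.mono'
    (g := fun e => Real.log (Fintype.card (HSPath x₁ t₁ x₂ t₂))
      + ∑ v ∈ boxOf x₁ t₁ t₂, |E.wbk v e|)
    ((integrable_const _).add (integrable_finset_sum _ fun v _ => (int_wbk E v).abs))
    (measurable_Gw_env E zt x₁ t₁ x₂ t₂).aestronglyMeasurable
    (Filter.Eventually.of_forall fun e => ?_)
  rw [Real.norm_eq_abs]
  exact abs_Gw_le zt _

lemma integrable_energy_env (E : EnvData Ω' P) (π : HSPath x₁ t₁ x₂ t₂) :
    Integrable (fun e => energy (fun v => E.wbk v e) π) P := by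
  unfold energy
  exact integrable_finset_sum _ fun s _ => int_wbk E _

lemma integral_energy_nonneg (E : EnvData Ω' P) (π : HSPath x₁ t₁ x₂ t₂) :
    0 ≤ ∫ e, energy (fun v => E.wbk v e) π ∂P := by
  unfold energy
  rw [integral_finset_sum _ fun s _ => int_wbk E _]
  refine Finset.sum_nonneg fun s _ => ?_
  rw [integral_wbk]
  exact mu0_nonneg E

end IntegrabilityAux

section MainEstimates

variable {Ω' : Type*} [MeasurableSpace Ω'] {P : Measure Ω'} [IsProbabilityMeasure P]

/-- Comparison: the half-space quantity is at most the full-space one. -/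
lemma Gw_le_GwF (zt : Bool) (wt : ℤ × ℤ → ℝ) (x₁ t₁ x₂ t₂ : ℤ)
    [Nonempty (HSPath x₁ t₁ x₂ t₂)] :
    Gw zt wt x₁ t₁ x₂ t₂ ≤ GwF zt wt x₁ t₁ x₂ t₂ := by
  classical
  cases zt
  · simp only [Gw_false, GwF_false, freeEnergy, freeEnergyF]
    have hZ : Zfun wt x₁ t₁ x₂ t₂ ≤ ∑ σ : FPath x₁ t₁ x₂ t₂, Real.exp (energyF wt σ) := by
      rw [Zfun_eq_sum]
      calc ∑ π : HSPath x₁ t₁ x₂ t₂, Real.exp (energy wt π)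
          = ∑ σ ∈ Finset.univ.image (HSPath.toF (x₁ := x₁) (t₁ := t₁) (x₂ := x₂) (t₂ := t₂)),
              Real.exp (energyF wt σ) := by
            rw [Finset.sum_image (fun a _ b _ h => HSPath.toF_injective h)]
            exact Finset.sum_congr rfl fun π _ => rfl
        _ ≤ ∑ σ : FPath x₁ t₁ x₂ t₂, Real.exp (energyF wt σ) :=
            Finset.sum_le_sum_of_subset_of_nonneg (Finset.subset_univ _)
              fun σ _ _ => (Real.exp_pos _).le
    rw [tsum_fintype]
    exact Real.log_le_log (Zfun_pos wt) hZ
  · simp only [Gw_true, GwF_true]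
    refine lpp_le wt fun π => ?_
    exact le_ciSup (f := fun σ : FPath x₁ t₁ x₂ t₂ => energyF wt σ)
      (Set.Finite.bddAbove (Set.finite_range _)) π.toF

lemma measurable_GbkF (E : EnvData Ω' P) (zt : Bool) (m : ℤ) (hm : 0 ≤ m) :
    Measurable (fun e => GbkF E zt 0 0 0 (2 * m) e) := by
  haveI : Nonempty (HSPath m 0 m (2 * m)) :=
    ⟨vertPath m 0 (2 * m) hm (by omega) (by omega)⟩
  have hrep : (fun e => GbkF E zt 0 0 0 (2 * m) e)
      = fun e => Psi zt m 0 m (2 * m) (fun i => E.wbk (i.1.1 - m, i.1.2) e) := by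
    funext e
    rw [GbkF_eq_GwF, GwF_rep zt _ m hm]
  rw [hrep]
  exact ((continuous_Psi zt m 0 m (2 * m)).measurable).comp
    (measurable_pi_lambda _ fun i => E.meas_wbk _)

lemma integrable_GbkF (E : EnvData Ω' P) (zt : Bool) (m : ℤ) (hm : 0 ≤ m) :
    Integrable (fun e => GbkF E zt 0 0 0 (2 * m) e) P := by
  haveI : Nonempty (HSPath m 0 m (2 * m)) :=
    ⟨vertPath m 0 (2 * m) hm (by omega) (by omega)⟩
  refine Integrable.mono'
    (g := fun e => Real.log (Fintype.card (HSPath m 0 m (2 * m)))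
      + ∑ v ∈ boxOf m 0 (2 * m), |E.wbk (v.1 - m, v.2) e|)
    ((integrable_const _).add (integrable_finset_sum _ fun v _ => (int_wbk E _).abs))
    (measurable_GbkF E zt m hm).aestronglyMeasurable
    (Filter.Eventually.of_forall fun e => ?_)
  rw [Real.norm_eq_abs, GbkF_eq_GwF, GwF_eq_Gw_shift zt _ m hm]
  exact abs_Gw_le zt _

/-- Expectation of a vertical block at abscissa `k` equals the full-space expectation. -/
lemma expect_block (E : EnvData Ω' P) (zt : Bool) (k a : ℤ) (hk : 0 ≤ k) :
    ∫ e, Gw zt (fun v => E.wbk v e) k a k (2 * k + a) ∂P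
      = ∫ e, GbkF E zt 0 0 0 (2 * k) e ∂P := by
  haveI : Nonempty (HSPath k 0 k (2 * k)) :=
    ⟨vertPath k 0 (2 * k) hk (by omega) (by omega)⟩
  have hΦ : Measurable (Psi zt k 0 k (2 * k)) :=
    (continuous_Psi zt k 0 k (2 * k)).measurable
  haveI : Fintype {v // v ∈ boxOf k 0 (2 * k)} := FinsetCoe.fintype _
  have hν1 : Function.Injective
      (fun i : {v // v ∈ boxOf k 0 (2 * k)} => ((i : ℤ × ℤ).1, (i : ℤ × ℤ).2 + a)) := by
    intro i j h
    obtain ⟨h1, h2⟩ := Prod.ext_iff.mp h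
    exact Subtype.ext (Prod.ext h1 (by simpa using h2))
  have hν2 : Function.Injective
      (fun i : {v // v ∈ boxOf k 0 (2 * k)} => ((i : ℤ × ℤ).1 - k, (i : ℤ × ℤ).2)) := by
    intro i j h
    obtain ⟨h1, h2⟩ := Prod.ext_iff.mp h
    exact Subtype.ext (Prod.ext (by simpa using sub_left_inj.mp h1) h2)
  calc ∫ e, Gw zt (fun v => E.wbk v e) k a k (2 * k + a) ∂P
      = ∫ e, Psi zt k 0 k (2 * k) (fun i => E.wbk ((i : ℤ × ℤ).1, (i : ℤ × ℤ).2 + a) e) ∂P := by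
        simp only [Gw_block_rep]
    _ = ∫ g, Psi zt k 0 k (2 * k) g ∂(Measure.pi fun _ : {v // v ∈ boxOf k 0 (2 * k)} => E.μbk) :=
        integral_Psi_comp E _ hν1 _ hΦ
    _ = ∫ e, Psi zt k 0 k (2 * k) (fun i => E.wbk ((i : ℤ × ℤ).1 - k, (i : ℤ × ℤ).2) e) ∂P :=
        (integral_Psi_comp E _ hν2 _ hΦ).symm
    _ = ∫ e, GbkF E zt 0 0 0 (2 * k) e ∂P := by
        refine integral_congr_ae (Filter.Eventually.of_forall fun e => ?_)
        rw [GbkF_eq_GwF, GwF_rep zt _ k hk]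

/-- The pointwise chain inequality. -/
lemma chain_pointwise (zt : Bool) (wt : ℤ × ℤ → ℝ) (k : ℤ) (hk : 1 ≤ k) (M : ℕ) :
    energy wt (diagUp k (by omega))
    + (∑ i ∈ Finset.range M, (Gw zt wt k (k + 2 * k * (i : ℤ)) k (k + 2 * k * ((i : ℤ) + 1))
        - wt (k, k + 2 * k * (i : ℤ))))
    + energy wt (diagDown k (k + 2 * k * (M : ℤ)) (by omega))
    - wt (k, k + 2 * k * (M : ℤ))
    ≤ Gw zt wt 0 0 0 (2 * k * ((M : ℤ) + 1)) := by
  have hk0 : (0 : ℤ) ≤ k := by omega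
  have hcast : ∀ j : ℕ, (0 : ℤ) ≤ 2 * k * (j : ℤ) :=
    fun j => mul_nonneg (by omega) (Int.natCast_nonneg j)
  have hmod : ∀ j : ℕ, (k + 2 * k * (j : ℤ) - k) % 2 = 0 := by
    intro j
    have h : k + 2 * k * (j : ℤ) - k = 2 * (k * (j : ℤ)) := by ring
    rw [h]
    exact Int.mul_emod_right 2 _
  have hstepeq : ∀ j : ℕ, k + 2 * k * ((j : ℤ) + 1) = k + 2 * k * (j : ℤ) + 2 * k := by
    intro j; ring
  have hNE : ∀ j : ℕ, Nonempty (HSPath 0 0 k (k + 2 * k * (j : ℤ))) := by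
    intro j
    exact ⟨(diagUp k hk0).concat
      (vertPath k k (k + 2 * k * (j : ℤ)) hk0 (by linarith [hcast j]) (hmod j))
      hk0 (by linarith [hcast j])⟩
  have hmain : ∀ j : ℕ, energy wt (diagUp k hk0)
      + (∑ i ∈ Finset.range j, (Gw zt wt k (k + 2 * k * (i : ℤ)) k (k + 2 * k * ((i : ℤ) + 1))
          - wt (k, k + 2 * k * (i : ℤ))))
      ≤ Gw zt wt 0 0 k (k + 2 * k * (j : ℤ)) := by
    intro j
    induction j with
    | zero =>
      simpa using energy_le_Gw zt wt (diagUp k hk0)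
    | succ j ih =>
      haveI h1 := hNE j
      haveI h2 : Nonempty (HSPath k (k + 2 * k * (j : ℤ)) k (k + 2 * k * ((j : ℤ) + 1))) :=
        ⟨vertPath k _ _ hk0 (by rw [hstepeq j]; omega)
          (by rw [hstepeq j]; simp)⟩
      have hcat := Gw_concat zt wt (x := 0) (y := k) (z := k)
        (a := 0) (b := k + 2 * k * (j : ℤ)) (c := k + 2 * k * ((j : ℤ) + 1))
        (by linarith [hcast j]) (by rw [hstepeq j]; omega)
      rw [Finset.sum_range_succ]
      push_cast
      push_cast at ih hcat
      linarith
  haveI hA := hNE M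
  haveI hB : Nonempty (HSPath k (k + 2 * k * (M : ℤ)) 0 (k + 2 * k * (M : ℤ) + k)) :=
    ⟨diagDown k (k + 2 * k * (M : ℤ)) hk0⟩
  have hcat := Gw_concat zt wt (x := 0) (y := k) (z := 0)
    (a := 0) (b := k + 2 * k * (M : ℤ)) (c := k + 2 * k * (M : ℤ) + k)
    (by linarith [hcast M]) (by omega)
  have hdd := energy_le_Gw zt wt (diagDown k (k + 2 * k * (M : ℤ)) hk0)
  have hM := hmain M
  have hfin : Gw zt wt 0 0 0 (k + 2 * k * (M : ℤ) + k)
      = Gw zt wt 0 0 0 (2 * k * ((M : ℤ) + 1)) := by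
    rw [show k + 2 * k * (M : ℤ) + k = 2 * k * ((M : ℤ) + 1) from by ring]
  rw [← hfin]
  linarith

/-- The expectation-level chain estimate. -/
lemma chain_expect (E : EnvData Ω' P) (zt : Bool) (k : ℤ) (hk : 1 ≤ k) (M : ℕ) :
    (M : ℝ) * (∫ e, GbkF E zt 0 0 0 (2 * k) e ∂P) - ((M : ℝ) + 1) * (∫ x, x ∂E.μbk)
      ≤ ∫ e, Gbk E zt 0 0 0 (2 * k * ((M : ℤ) + 1)) e ∂P := by
  have hk0 : (0 : ℤ) ≤ k := by omega
  have hcast : ∀ j : ℕ, (0 : ℤ) ≤ 2 * k * (j : ℤ) :=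
    fun j => mul_nonneg (by omega) (Int.natCast_nonneg j)
  have hstepeq : ∀ j : ℕ, k + 2 * k * ((j : ℤ) + 1) = k + 2 * k * (j : ℤ) + 2 * k := by
    intro j; ring
  haveI hNEblk : ∀ i : ℕ,
      Nonempty (HSPath k (k + 2 * k * (i : ℤ)) k (k + 2 * k * ((i : ℤ) + 1))) := fun i =>
    ⟨vertPath k _ _ hk0 (by rw [hstepeq i]; omega) (by rw [hstepeq i]; simp)⟩
  haveI hNEbig : Nonempty (HSPath 0 0 0 (2 * k * ((M : ℤ) + 1))) := by
    refine ⟨vertPath 0 0 _ le_rfl ?_ ?_⟩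
    · have h1 : (0 : ℤ) ≤ (M : ℤ) + 1 := by omega
      nlinarith
    · rw [show 2 * k * ((M : ℤ) + 1) - 0 = 2 * (k * ((M : ℤ) + 1)) from by ring]
      exact Int.mul_emod_right 2 _
  set wte : Ω' → (ℤ × ℤ → ℝ) := fun e v => E.wbk v e with hwte
  set D1 : Ω' → ℝ := fun e => energy (wte e) (diagUp k hk0) with hD1
  set D2 : Ω' → ℝ := fun e => energy (wte e) (diagDown k (k + 2 * k * (M : ℤ)) hk0) with hD2
  set B : ℕ → Ω' → ℝ := fun i e =>
    Gw zt (wte e) k (k + 2 * k * (i : ℤ)) k (k + 2 * k * ((i : ℤ) + 1)) with hBdef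
  set J : ℕ → Ω' → ℝ := fun i e => E.wbk (k, k + 2 * k * (i : ℤ)) e with hJdef
  have hpt : ∀ e, D1 e + (∑ i ∈ Finset.range M, (B i e - J i e)) + D2 e - J M e
      ≤ Gw zt (wte e) 0 0 0 (2 * k * ((M : ℤ) + 1)) :=
    fun e => chain_pointwise zt (wte e) k hk M
  have ID1 : Integrable D1 P := integrable_energy_env E _
  have ID2 : Integrable D2 P := integrable_energy_env E _
  have IB : ∀ i : ℕ, Integrable (B i) P := fun i => integrable_Gw_env E zt k _ k _
  have IJ : ∀ i : ℕ, Integrable (J i) P := fun i => int_wbk E _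
  have IBJ : ∀ i : ℕ, Integrable (fun e => B i e - J i e) P := fun i => by
    exact (IB i).sub (IJ i)
  have ISum : Integrable (fun e => ∑ i ∈ Finset.range M, (B i e - J i e)) P :=
    integrable_finset_sum _ fun i _ => IBJ i
  have IG : Integrable (fun e => Gw zt (wte e) 0 0 0 (2 * k * ((M : ℤ) + 1))) P :=
    integrable_Gw_env E zt 0 0 0 _
  have IF2 : Integrable (fun e => D1 e + (∑ i ∈ Finset.range M, (B i e - J i e))) P := by
    exact ID1.add ISum
  have IF1 : Integrable (fun e => D1 e + (∑ i ∈ Finset.range M, (B i e - J i e)) + D2 e) P := by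
    exact IF2.add ID2
  have IF0 : Integrable
      (fun e => D1 e + (∑ i ∈ Finset.range M, (B i e - J i e)) + D2 e - J M e) P := by
    exact IF1.sub (IJ M)
  have hmono := integral_mono IF0 IG hpt
  have hIF : ∫ e, (D1 e + (∑ i ∈ Finset.range M, (B i e - J i e)) + D2 e - J M e) ∂P
      = (∫ e, D1 e ∂P)
        + (∑ i ∈ Finset.range M, ((∫ e, B i e ∂P) - ∫ e, J i e ∂P))
        + (∫ e, D2 e ∂P) - ∫ e, J M e ∂P := by
    rw [integral_sub IF1 (IJ M),
      integral_add IF2 ID2,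
      integral_add ID1 ISum,
      integral_finset_sum _ fun i _ => IBJ i]
    rw [Finset.sum_congr rfl fun i _ => integral_sub (IB i) (IJ i)]
  have hblk : ∀ i : ℕ, (∫ e, B i e ∂P) = ∫ e, GbkF E zt 0 0 0 (2 * k) e ∂P := by
    intro i
    have hsh : k + 2 * k * ((i : ℤ) + 1) = 2 * k + (k + 2 * k * (i : ℤ)) := by ring
    rw [hBdef]
    simp only [hsh]
    exact expect_block E zt k _ hk0
  have hjun : ∀ i : ℕ, (∫ e, J i e ∂P) = ∫ x, x ∂E.μbk := fun i => integral_wbk E _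
  have hsum : ∑ i ∈ Finset.range M, ((∫ e, B i e ∂P) - ∫ e, J i e ∂P)
      = (M : ℝ) * ((∫ e, GbkF E zt 0 0 0 (2 * k) e ∂P) - ∫ x, x ∂E.μbk) := by
    rw [Finset.sum_congr rfl fun i _ => by rw [hblk i, hjun i]]
    rw [Finset.sum_const, Finset.card_range, nsmul_eq_mul]
  have hD1pos : 0 ≤ ∫ e, D1 e ∂P := integral_energy_nonneg E _
  have hD2pos : 0 ≤ ∫ e, D2 e ∂P := integral_energy_nonneg E _
  rw [hIF, hsum, hjun M] at hmono
  have hGbk : (∫ e, Gw zt (wte e) 0 0 0 (2 * k * ((M : ℤ) + 1)) ∂P)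
      = ∫ e, Gbk E zt 0 0 0 (2 * k * ((M : ℤ) + 1)) e ∂P := rfl
  rw [hGbk] at hmono
  linarith

end MainEstimates

/-- **In an i.i.d. environment, the half-space vertical LLN constant coincides with the
full-space one**: `g^bk_f(e) = g^bk(e)` for `e = (0,1)`. -/
theorem vertical_lln_full_eq_half
    {Ω : Type*} [MeasurableSpace Ω] (P : Measure Ω) [IsProbabilityMeasure P]
    (E : EnvData Ω P) (zt : Bool) (g1 g2 : ℝ)
    (h1 : Tendsto (fun n : ℕ =>
        (∫ e, Gbk E zt 0 0 0 (2 * ((n : ℤ) / 2)) e ∂P) / (n : ℝ)) atTop (nhds g1))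
    (h2 : Tendsto (fun n : ℕ =>
        (∫ e, GbkF E zt 0 0 0 (2 * ((n : ℤ) / 2)) e ∂P) / (n : ℝ)) atTop (nhds g2)) :
    g2 = g1 := by
  classical
  set μ0 := ∫ x, x ∂E.μbk with hμ0def
  have hμ0 : 0 ≤ μ0 := mu0_nonneg E
  have hsub2 : Tendsto (fun k : ℕ => 2 * k) atTop atTop :=
    Filter.tendsto_atTop_mono (fun k => Nat.le_mul_of_pos_left k (by omega))
      Filter.tendsto_id
  have hcastdiv : ∀ k : ℕ, (((2 * k : ℕ) : ℤ) / 2) = (k : ℤ) := by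
    intro k; push_cast; omega
  have h1e : Tendsto (fun k : ℕ =>
      (∫ e, Gbk E zt 0 0 0 (2 * (k : ℤ)) e ∂P) / (2 * (k : ℝ))) atTop (nhds g1) := by
    refine (h1.comp hsub2).congr fun k => ?_
    simp only [Function.comp_apply]
    rw [hcastdiv k]
    congr 1
    push_cast
    ring
  have h2e : Tendsto (fun k : ℕ =>
      (∫ e, GbkF E zt 0 0 0 (2 * (k : ℤ)) e ∂P) / (2 * (k : ℝ))) atTop (nhds g2) := by
    refine (h2.comp hsub2).congr fun k => ?_
    simp only [Function.comp_apply]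
    rw [hcastdiv k]
    congr 1
    push_cast
    ring
  -- Step A : `g1 ≤ g2`.
  have hAk : ∀ k : ℕ, (∫ e, Gbk E zt 0 0 0 (2 * (k : ℤ)) e ∂P)
      ≤ ∫ e, GbkF E zt 0 0 0 (2 * (k : ℤ)) e ∂P := by
    intro k
    haveI : Nonempty (HSPath 0 0 0 (2 * (k : ℤ))) :=
      ⟨vertPath 0 0 _ le_rfl (by omega) (by omega)⟩
    refine integral_mono (by exact integrable_Gw_env E zt 0 0 0 _)
      (integrable_GbkF E zt (k : ℤ) (Int.natCast_nonneg k)) fun e => ?_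
    exact Gw_le_GwF zt _ 0 0 0 _
  have hg1leg2 : g1 ≤ g2 := by
    refine le_of_tendsto_of_tendsto' h1e h2e fun k => ?_
    rcases Nat.eq_zero_or_pos k with hk | hk
    · subst hk; simp
    · have hden : (0 : ℝ) < 2 * (k : ℝ) := by
        have : (0 : ℝ) < (k : ℝ) := by exact_mod_cast hk
        linarith
      exact (div_le_div_iff_of_pos_right hden).mpr (hAk k)
  -- Step B : `d k ≤ 2k g1 + μ0` for `k ≥ 1`.
  have hBk : ∀ k : ℕ, 1 ≤ k →
      (∫ e, GbkF E zt 0 0 0 (2 * (k : ℤ)) e ∂P) / (2 * (k : ℝ))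
        ≤ g1 + μ0 / (2 * (k : ℝ)) := by
    intro k hk
    set d := ∫ e, GbkF E zt 0 0 0 (2 * (k : ℤ)) e ∂P with hd
    have hkR : (1 : ℝ) ≤ (k : ℝ) := by exact_mod_cast hk
    have hsubM : Tendsto (fun M : ℕ => 2 * (k * (M + 1))) atTop atTop := by
      refine Filter.tendsto_atTop_mono (fun M => ?_) Filter.tendsto_id
      show M ≤ 2 * (k * (M + 1))
      have h1' : M + 1 ≤ k * (M + 1) := Nat.le_mul_of_pos_left (M + 1) (by omega)
      omega
    have hseq1 : Tendsto (fun M : ℕ =>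
        (∫ e, Gbk E zt 0 0 0 (2 * (k : ℤ) * ((M : ℤ) + 1)) e ∂P)
          / (2 * (k : ℝ) * ((M : ℝ) + 1))) atTop (nhds g1) := by
      refine (h1.comp hsubM).congr fun M => ?_
      simp only [Function.comp_apply]
      have hz : (((2 * (k * (M + 1)) : ℕ) : ℤ)) / 2 = (k : ℤ) * ((M : ℤ) + 1) := by
        push_cast; omega
      rw [hz, show 2 * ((k : ℤ) * ((M : ℤ) + 1)) = 2 * (k : ℤ) * ((M : ℤ) + 1) from by ring]
      congr 1
      push_cast
      ring
    have hineq : ∀ M : ℕ, ((M : ℝ) * d - ((M : ℝ) + 1) * μ0) / (2 * (k : ℝ) * ((M : ℝ) + 1))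
        ≤ (∫ e, Gbk E zt 0 0 0 (2 * (k : ℤ) * ((M : ℤ) + 1)) e ∂P)
            / (2 * (k : ℝ) * ((M : ℝ) + 1)) := by
      intro M
      have hden : (0 : ℝ) < 2 * (k : ℝ) * ((M : ℝ) + 1) := by
        have hM : (0 : ℝ) ≤ (M : ℝ) := Nat.cast_nonneg M
        nlinarith
      exact (div_le_div_iff_of_pos_right hden).mpr (chain_expect E zt (k : ℤ) (by exact_mod_cast hk) M)
    have hM1 : Tendsto (fun M : ℕ => ((M : ℝ) + 1)⁻¹) atTop (nhds 0) :=
      tendsto_inv_atTop_zero.comp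
        (tendsto_atTop_add_const_right atTop 1 tendsto_natCast_atTop_atTop)
    have hMM : Tendsto (fun M : ℕ => (M : ℝ) / ((M : ℝ) + 1)) atTop (nhds 1) := by
      have heq : (fun M : ℕ => (M : ℝ) / ((M : ℝ) + 1))
          = fun M : ℕ => 1 - ((M : ℝ) + 1)⁻¹ := by
        funext M
        have hM0 : ((M : ℝ) + 1) ≠ 0 := by positivity
        field_simp
        ring
      rw [heq]
      simpa using tendsto_const_nhds.sub hM1
    have hseq2 : Tendsto (fun M : ℕ =>
        ((M : ℝ) * d - ((M : ℝ) + 1) * μ0) / (2 * (k : ℝ) * ((M : ℝ) + 1)))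
        atTop (nhds (d / (2 * (k : ℝ)) - μ0 / (2 * (k : ℝ)))) := by
      have hrw : ∀ M : ℕ, ((M : ℝ) * d - ((M : ℝ) + 1) * μ0) / (2 * (k : ℝ) * ((M : ℝ) + 1))
          = (d / (2 * (k : ℝ))) * ((M : ℝ) / ((M : ℝ) + 1)) - μ0 / (2 * (k : ℝ)) := by
        intro M
        have hM0 : ((M : ℝ) + 1) ≠ 0 := by positivity
        have hk0 : (2 * (k : ℝ)) ≠ 0 := by
          have : (0 : ℝ) < (k : ℝ) := by linarith
          positivity
        field_simp
      simp only [hrw]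
      have := (((tendsto_const_nhds (x := d / (2 * (k : ℝ))) (f := atTop)).mul hMM).sub
        (tendsto_const_nhds (x := μ0 / (2 * (k : ℝ)))))
      simpa using this
    have hle := le_of_tendsto_of_tendsto' hseq2 hseq1 hineq
    linarith
  -- Step C : conclude `g2 ≤ g1`.
  have h2k : Tendsto (fun k : ℕ => 2 * (k : ℝ)) atTop atTop := by
    have := tendsto_natCast_atTop_atTop (R := ℝ)
    exact Filter.Tendsto.const_mul_atTop (by norm_num) this
  have hg1' : Tendsto (fun k : ℕ => g1 + μ0 / (2 * (k : ℝ))) atTop (nhds g1) := by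
    have h0 : Tendsto (fun k : ℕ => μ0 / (2 * (k : ℝ))) atTop (nhds 0) := by
      have hinv : Tendsto (fun k : ℕ => (2 * (k : ℝ))⁻¹) atTop (nhds 0) :=
        tendsto_inv_atTop_zero.comp h2k
      have heq : (fun k : ℕ => μ0 / (2 * (k : ℝ)))
          = fun k : ℕ => μ0 * (2 * (k : ℝ))⁻¹ := funext fun k => div_eq_mul_inv _ _
      rw [heq]
      simpa using tendsto_const_nhds.mul hinv
    simpa using (tendsto_const_nhds (x := g1) (f := atTop)).add h0
  have hg2leg1 : g2 ≤ g1 :=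
    le_of_tendsto_of_tendsto h2e hg1'
      (Filter.eventually_atTop.mpr ⟨1, fun k hk => hBk k hk⟩)
  exact le_antisymm hg2leg1 hg1leg2
end HalfSpacePolymer
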